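/- arXiv:0709.2469 — 3 statements merged into one kernel-verified Lean document; each statement's English description precedes it below -/
import Mathlib

section
/- Let k be an algebraically closed field, let m be a natural number, and let h₁, …, h_t ∈ k[x,y] (t ≥ 1) be polynomials in two variables, each of total degree at most m. Suppose that every common divisor of h₁, …, h_t in k[x,y] is a unit (a nonzero constant), i.e. the greatest common divisor of h₁, …, h_t is 1. Then the set of common roots {(α,β) ∈ k² : h_i(α,β) = 0 for all i = 1, …, t} has at most m² elements. -/
open MvPolynomial

section Aux

variable {k : Type*} [Field k] {σ : Type*}



lemma hc_top_ne_zero (p : MvPolynomial σ k) (hp : p ≠ 0) :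
    homogeneousComponent p.totalDegree p ≠ 0 := by
  obtain ⟨d, hd, hdeg⟩ : ∃ d ∈ p.support, (d.sum fun _ e => e) = p.totalDegree := by
    obtain ⟨d, hd, h2⟩ := Finset.exists_mem_eq_sup p.support
      (support_nonempty.mpr hp) (fun s => s.sum fun _ e => e)
    exact ⟨d, hd, h2.symm⟩
  intro h0
  have := coeff_homogeneousComponent (φ := p) p.totalDegree d
  rw [h0, if_pos (by simpa [Finsupp.degree_apply, Finsupp.sum] using hdeg)] at this
  simp only [coeff_zero] at this
  exact (mem_support_iff.mp hd) this.symm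

lemma my_totalDegree_mul_eq (p q : MvPolynomial σ k) (hp : p ≠ 0) (hq : q ≠ 0) :
    (p * q).totalDegree = p.totalDegree + q.totalDegree := by
  refine le_antisymm (totalDegree_mul p q) ?_
  set m := p.totalDegree with hm
  set n := q.totalDegree with hn
  have hmem : ∀ (i j : ℕ), homogeneousComponent i p * homogeneousComponent j q ∈
      homogeneousSubmodule σ k (i + j) := fun i j =>
    (mem_homogeneousSubmodule _ _).mpr
      ((homogeneousComponent_isHomogeneous i p).mul (homogeneousComponent_isHomogeneous j q))
  have key : homogeneousComponent (m + n) (p * q) =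
      homogeneousComponent m p * homogeneousComponent n q := by
    conv_lhs => rw [← sum_homogeneousComponent p, ← sum_homogeneousComponent q]
    rw [Finset.sum_mul_sum, map_sum, Finset.sum_congr rfl (fun i _ => map_sum _ _ _)]
    rw [Finset.sum_eq_single m]
    · rw [Finset.sum_eq_single n]
      · exact (homogeneousComponent_of_mem (hmem m n)).trans (if_pos rfl)
      · intro j hj hjn
        refine (homogeneousComponent_of_mem (hmem m j)).trans (if_neg ?_)
        omega
      · intro hnmem; exact absurd (Finset.self_mem_range_succ n) hnmem
    · intro i hi him
      rw [Finset.sum_eq_zero]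
      intro j hj
      refine (homogeneousComponent_of_mem (hmem i j)).trans (if_neg ?_)
      simp only [Finset.mem_range, Nat.lt_succ_iff] at hi hj
      omega
    · intro hmmem; exact absurd (Finset.self_mem_range_succ m) hmmem
  have hne : homogeneousComponent (m + n) (p * q) ≠ 0 := by
    rw [key]
    exact mul_ne_zero (hc_top_ne_zero p hp) (hc_top_ne_zero q hq)
  by_contra hlt
  exact hne (homogeneousComponent_eq_zero _ _ (lt_of_not_ge hlt))



/-- the dimension count -/
noncomputable def Dd (e : ℕ) : ℕ := ∑ i ∈ Finset.range (e + 1), (i + 1)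

lemma Dd_identity (a b e : ℕ) : Dd (a + b + e) + Dd e = Dd (a + e) + Dd (b + e) + a * b := by
  induction a with
  | zero => simp [Nat.add_comm]
  | succ a ih =>
    have h1 : a + 1 + b + e = (a + b + e) + 1 := by ring
    have h2 : a + 1 + e = (a + e) + 1 := by ring
    rw [h1, h2]
    show Dd ((a+b+e)+1) + Dd e = _
    unfold Dd
    rw [Finset.sum_range_succ, Finset.sum_range_succ (n := a + e + 1)]
    show (Dd (a+b+e) + _) + Dd e = (Dd (a+e) + _) + Dd (b+e) + _
    have h3 : (a+1)*b = a*b + b := by ring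
    omega

lemma finrank_Vd (e : ℕ) :
    Module.finrank k (restrictTotalDegree (Fin 2) k e) = Dd e := by
  classical
  set S : Set (Fin 2 →₀ ℕ) := { n | (n.sum fun _ e => e) ≤ e } with hS
  have hsum : ∀ n : Fin 2 →₀ ℕ, (n.sum fun _ e => e) = n 0 + n 1 := by
    intro n
    rw [Finsupp.sum_fintype _ _ (fun _ => rfl), Fin.sum_univ_two]
  let T : Finset ((_ : ℕ) × ℕ) := (Finset.range (e + 1)).sigma fun a => Finset.range (e + 1 - a)
  have equiv : S ≃ (T : Finset _) := by
    refine ⟨fun n => ⟨⟨n.1 0, n.1 1⟩, ?_⟩, fun s =>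
      ⟨Finsupp.equivFunOnFinite.symm ![s.1.1, s.1.2], ?_⟩, ?_, ?_⟩
    · have := n.2
      simp only [hS, Set.mem_setOf_eq, hsum] at this
      simp only [T, Finset.mem_sigma, Finset.mem_range]
      omega
    · have := s.2
      simp only [T, Finset.mem_sigma, Finset.mem_range] at this
      simp only [hS, Set.mem_setOf_eq, hsum]
      simp only [Finsupp.coe_equivFunOnFinite_symm, Matrix.cons_val_zero,
        Matrix.cons_val_one, Matrix.head_cons]
      omega
    · intro n
      ext i
      fin_cases i <;> simp
    · intro s
      ext
      · simp
      · simp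
  have fin : Fintype S := Fintype.ofEquiv _ equiv.symm
  have : Module.finrank k (restrictSupport k S) = Dd e → Module.finrank k (restrictTotalDegree (Fin 2) k e) = Dd e := fun h => h
  apply this
  rw [Module.finrank_eq_card_basis (basisRestrictSupport k S)]
  rw [Fintype.card_congr equiv, Fintype.card_coe]
  rw [Finset.card_sigma]
  simp only [Finset.card_range]
  unfold Dd
  rw [← Finset.sum_range_reflect]
  refine Finset.sum_congr rfl fun i hi => ?_
  simp only [Finset.mem_range] at hi
  omega





open scoped Classical in
/-- linear form vanishing at q but not at p (for q ≠ p) -/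
noncomputable def lform (p q : k × k) : MvPolynomial (Fin 2) k :=
  if q.1 ≠ p.1 then (X 0 - C q.1) else (X 1 - C q.2)

lemma lform_deg (p q : k × k) : (lform p q).totalDegree ≤ 1 := by
  unfold lform
  split <;>
  · refine (totalDegree_sub _ _).trans ?_
    simp [totalDegree_X]

lemma lform_eval_self (p q : k × k) : eval ![q.1, q.2] (lform p q) = 0 := by
  unfold lform
  split <;> simp

lemma lform_eval_ne (p q : k × k) (h : q ≠ p) : eval ![p.1, p.2] (lform p q) ≠ 0 := by
  unfold lform
  split
  · next hne => simpa [sub_eq_zero] using fun hc => hne hc.symm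
  · next hne =>
    push_neg at hne
    have : q.2 ≠ p.2 := fun hc => h (Prod.ext hne hc)
    simpa [sub_eq_zero] using fun hc => this hc.symm

set_option maxHeartbeats 2000000 in
set_option synthInstance.maxHeartbeats 1000000 in
theorem bezout_count (f g : MvPolynomial (Fin 2) k) (hf : f ≠ 0) (hg : g ≠ 0)
    (hrp : IsRelPrime f g) (S : Finset (k × k))
    (hS : ∀ p ∈ S, eval ![p.1, p.2] f = 0 ∧ eval ![p.1, p.2] g = 0) :
    S.card ≤ f.totalDegree * g.totalDegree := by
  classical
  set m' := f.totalDegree with hm'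
  set n' := g.totalDegree with hn'
  set e := S.card with he
  set d := m' + n' + e with hd
  set V : ℕ → Submodule k (MvPolynomial (Fin 2) k) := fun x => restrictTotalDegree (Fin 2) k x
    with hV
  have memV : ∀ (x : ℕ) (p : MvPolynomial (Fin 2) k), p ∈ V x ↔ p.totalDegree ≤ x :=
    fun x p => mem_restrictTotalDegree (Fin 2) x p
  -- the evaluation map
  set E : V d →ₗ[k] (↥S → k) :=
    (LinearMap.pi fun q : ↥S => (aeval ![q.1.1, q.1.2]).toLinearMap) ∘ₗ (V d).subtype with hE
  have hEapply : ∀ (x : V d) (q : ↥S), E x q = eval ![q.1.1, q.1.2] (x : MvPolynomial (Fin 2) k) := by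
    intro x q
    show (aeval ![q.1.1, q.1.2]) (x : MvPolynomial (Fin 2) k) = _
    rw [← coe_aeval_eq_eval]
    rfl
  -- E is surjective
  have hEsurj : Function.Surjective E := by
    intro v
    -- interpolation polynomials
    set χ : k × k → MvPolynomial (Fin 2) k := fun p => ∏ q ∈ S.erase p, lform p q with hχ
    have hχdeg : ∀ p, (χ p).totalDegree ≤ d := by
      intro p
      refine (totalDegree_finset_prod _ _).trans ?_
      calc ∑ q ∈ S.erase p, (lform p q).totalDegree ≤ ∑ q ∈ S.erase p, 1 :=
            Finset.sum_le_sum fun q _ => lform_deg p q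
        _ = (S.erase p).card := by simp
        _ ≤ e := by rw [he]; exact Finset.card_le_card (Finset.erase_subset _ _)
        _ ≤ d := by omega
    have hχself : ∀ p, eval ![p.1, p.2] (χ p) ≠ 0 := by
      intro p
      rw [hχ]
      rw [map_prod]
      exact Finset.prod_ne_zero_iff.mpr fun q hq =>
        lform_eval_ne p q (Finset.ne_of_mem_erase hq)
    have hχother : ∀ p q : k × k, q ∈ S → q ≠ p → eval ![q.1, q.2] (χ p) = 0 := by
      intro p q hqS hqp
      rw [hχ, map_prod]
      exact Finset.prod_eq_zero (Finset.mem_erase.mpr ⟨hqp, hqS⟩) (lform_eval_self p q)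
    set P : MvPolynomial (Fin 2) k :=
      ∑ p ∈ S.attach, (v p * (eval ![p.1.1, p.1.2] (χ p.1))⁻¹) • χ p.1 with hP
    have hPmem : P ∈ V d := by
      refine Submodule.sum_mem _ fun p _ => Submodule.smul_mem _ _ ?_
      rw [memV]
      exact hχdeg p.1
    refine ⟨⟨P, hPmem⟩, funext fun q => ?_⟩
    rw [hEapply]
    show eval ![q.1.1, q.1.2] P = v q
    rw [hP, map_sum]
    rw [Finset.sum_eq_single q]
    · rw [smul_eval, mul_assoc, inv_mul_cancel₀ (hχself q.1), mul_one]
    · intro p _ hpq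
      rw [smul_eval, hχother p.1 q.1 q.2 (fun hc => hpq (Subtype.ext hc).symm), mul_zero]
    · intro hq; exact absurd (Finset.mem_attach _ q) hq
  -- the multiplication submodules
  set U₁ : Submodule k (MvPolynomial (Fin 2) k) :=
    Submodule.map (LinearMap.mulLeft k f) (V (n' + e)) with hU₁
  set U₂ : Submodule k (MvPolynomial (Fin 2) k) :=
    Submodule.map (LinearMap.mulLeft k g) (V (m' + e)) with hU₂
  have hU₁le : U₁ ≤ V d := by
    rintro x ⟨a, ha, rfl⟩
    rw [SetLike.mem_coe, memV] at ha
    rw [memV]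
    calc (LinearMap.mulLeft k f a).totalDegree = (f * a).totalDegree := rfl
      _ ≤ m' + a.totalDegree := totalDegree_mul f a
      _ ≤ d := by omega
  have hU₂le : U₂ ≤ V d := by
    rintro x ⟨a, ha, rfl⟩
    rw [SetLike.mem_coe, memV] at ha
    rw [memV]
    calc (LinearMap.mulLeft k g a).totalDegree = (g * a).totalDegree := rfl
      _ ≤ n' + a.totalDegree := totalDegree_mul g a
      _ ≤ d := by omega
  set Z : Submodule k (MvPolynomial (Fin 2) k) :=
    Submodule.map (LinearMap.mulLeft k (f * g)) (V e) with hZ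
  have hZle : Z ≤ V d := by
    rintro x ⟨a, ha, rfl⟩
    rw [SetLike.mem_coe, memV] at ha
    rw [memV]
    calc (LinearMap.mulLeft k (f*g) a).totalDegree = (f * g * a).totalDegree := rfl
      _ ≤ (f*g).totalDegree + a.totalDegree := totalDegree_mul _ a
      _ ≤ (m' + n') + e := add_le_add (totalDegree_mul f g) ha
      _ = d := by omega
  -- intersection bound
  have hinf : U₁ ⊓ U₂ ≤ Z := by
    rintro x ⟨⟨a, ha, rfl⟩, ⟨b, hb, hba⟩⟩
    simp only [LinearMap.mulLeft_apply] at hba ⊢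
    rcases eq_or_ne (f * a) 0 with h0 | h0
    · rw [h0]; exact Submodule.zero_mem Z
    have hane : a ≠ 0 := fun hc => h0 (by rw [hc, mul_zero])
    have hgd : g ∣ a := by
      refine hrp.symm.dvd_of_dvd_mul_left ?_
      exact ⟨b, by rw [← hba]⟩
    obtain ⟨c, rfl⟩ := hgd
    have hcne : c ≠ 0 := fun hc => hane (by rw [hc, mul_zero])
    refine ⟨c, ?_, by simp only [LinearMap.mulLeft_apply]; ring⟩
    rw [SetLike.mem_coe, memV] at ha
    rw [SetLike.mem_coe, memV]
    rw [my_totalDegree_mul_eq g c hg hcne] at ha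
    omega
  -- move into V d
  set U₁' := Submodule.comap (V d).subtype U₁ with hU₁'
  set U₂' := Submodule.comap (V d).subtype U₂ with hU₂'
  have hker : U₁' ⊔ U₂' ≤ LinearMap.ker E := by
    refine sup_le ?_ ?_
    · rintro ⟨x, hx⟩ hmem
      obtain ⟨a, _, ha⟩ := hmem
      simp only [LinearMap.mulLeft_apply] at ha
      rw [LinearMap.mem_ker]
      funext q
      rw [hEapply]
      have ha' : f * a = x := ha
      show eval ![q.1.1, q.1.2] x = 0
      rw [← ha', map_mul, (hS q.1 q.2).1, zero_mul]
    · rintro ⟨x, hx⟩ hmem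
      obtain ⟨a, _, ha⟩ := hmem
      simp only [LinearMap.mulLeft_apply] at ha
      rw [LinearMap.mem_ker]
      funext q
      rw [hEapply]
      have ha' : g * a = x := ha
      show eval ![q.1.1, q.1.2] x = 0
      rw [← ha', map_mul, (hS q.1 q.2).2, zero_mul]
  -- finrank computations
  have hmulinj : ∀ w : MvPolynomial (Fin 2) k, w ≠ 0 →
      Function.Injective (LinearMap.mulLeft k w) := by
    intro w hw x y hxy
    simp only [LinearMap.mulLeft_apply] at hxy
    exact mul_left_cancel₀ hw hxy
  have hrk1 : Module.finrank k U₁' = Dd (n' + e) := by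
    rw [LinearEquiv.finrank_eq (Submodule.comapSubtypeEquivOfLe hU₁le)]
    rw [← LinearEquiv.finrank_eq (Submodule.equivMapOfInjective _ (hmulinj f hf) (V (n' + e)))]
    exact finrank_Vd (n' + e)
  have hrk2 : Module.finrank k U₂' = Dd (m' + e) := by
    rw [LinearEquiv.finrank_eq (Submodule.comapSubtypeEquivOfLe hU₂le)]
    rw [← LinearEquiv.finrank_eq (Submodule.equivMapOfInjective _ (hmulinj g hg) (V (m' + e)))]
    exact finrank_Vd (m' + e)
  have hrkZ : Module.finrank k (Submodule.comap (V d).subtype Z) = Dd e := by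
    rw [LinearEquiv.finrank_eq (Submodule.comapSubtypeEquivOfLe hZle)]
    rw [← LinearEquiv.finrank_eq (Submodule.equivMapOfInjective _
      (hmulinj (f * g) (mul_ne_zero hf hg)) (V e))]
    exact finrank_Vd e
  have hrkinf : Module.finrank k ↥(U₁' ⊓ U₂') ≤ Dd e := by
    rw [← hrkZ]
    refine Submodule.finrank_mono ?_
    rw [hU₁', hU₂', ← Submodule.comap_inf]
    exact Submodule.comap_mono hinf
  have hsup : Module.finrank k ↥(U₁' ⊔ U₂') + Module.finrank k ↥(U₁' ⊓ U₂') =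
      Dd (n' + e) + Dd (m' + e) := by
    rw [Submodule.finrank_sup_add_finrank_inf_eq, hrk1, hrk2]
  have hkerrank : Dd (n' + e) + Dd (m' + e) ≤ Module.finrank k (LinearMap.ker E) + Dd e := by
    calc Dd (n' + e) + Dd (m' + e)
        = Module.finrank k ↥(U₁' ⊔ U₂') + Module.finrank k ↥(U₁' ⊓ U₂') := hsup.symm
      _ ≤ Module.finrank k (LinearMap.ker E) + Dd e :=
          add_le_add (Submodule.finrank_mono hker) hrkinf
  -- rank-nullity
  have hrange : Module.finrank k (LinearMap.range E) = e := by
    rw [LinearMap.range_eq_top.mpr hEsurj]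
    rw [finrank_top]
    rw [Module.finrank_pi]
    simp [he]
  have hrn : Module.finrank k (LinearMap.range E) + Module.finrank k (LinearMap.ker E) =
      Module.finrank k (V d) := LinearMap.finrank_range_add_finrank_ker E
  rw [hrange, finrank_Vd] at hrn
  have hid := Dd_identity m' n' e
  have hdd : Dd d = Dd (m' + n' + e) := by rw [hd]
  have hgoal : S.card = e := he.symm
  show S.card ≤ m' * n'
  omega


end Aux


/-- Statement (14.1): polynomials in two variables of degree at most m over an
algebraically closed field whose gcd is 1 have at most m² common roots. -/
theorem stmt_2 {k : Type*} [Field k] [IsAlgClosed k] (m t : ℕ) (ht : 1 ≤ t)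
    (h : Fin t → MvPolynomial (Fin 2) k)
    (hdeg : ∀ i, (h i).totalDegree ≤ m)
    (hgcd : ∀ d : MvPolynomial (Fin 2) k, (∀ i, d ∣ h i) → IsUnit d) :
    {p : k × k | ∀ i, MvPolynomial.eval ![p.1, p.2] (h i) = 0}.Finite ∧
    {p : k × k | ∀ i, MvPolynomial.eval ![p.1, p.2] (h i) = 0}.ncard ≤ m ^ 2 := by
  classical
  set Sset := {p : k × k | ∀ i, MvPolynomial.eval ![p.1, p.2] (h i) = 0} with hSset
  -- a key helper: every finite subset has card ≤ m ^ 2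
  have key : ∀ S : Finset (k × k), ↑S ⊆ Sset → S.card ≤ m ^ 2 := by
    intro S hSsub
    -- find a nonzero member
    have hex : ∃ i, h i ≠ 0 := by
      by_contra hall
      push_neg at hall
      have := hgcd (X 0) fun i => by rw [hall i]; exact dvd_zero _
      obtain ⟨u, hu⟩ := isUnit_iff_exists_inv.mp this
      have hu0 : u ≠ 0 := by rintro rfl; simp at hu
      have := my_totalDegree_mul_eq (X 0 : MvPolynomial (Fin 2) k) u (X_ne_zero 0) hu0
      rw [hu, totalDegree_one, totalDegree_X] at this
      omega
    obtain ⟨i₀, hi₀⟩ := hex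
    set f := h i₀ with hf
    -- case: f is a unit; then Sset is empty
    by_cases hfu : IsUnit f
    · have : S = ∅ := by
        rw [Finset.eq_empty_iff_forall_notMem]
        intro p hp
        have hz := (hSsub hp) i₀
        have : IsUnit (eval ![p.1, p.2] f) := hfu.map (eval ![p.1, p.2])
        rw [hz] at this
        exact (not_isUnit_zero : ¬IsUnit (0 : k)) this
      simp [this]
    -- the linear combination map
    set L : (Fin t → k) →ₗ[k] MvPolynomial (Fin 2) k :=
      { toFun := fun c => ∑ i, c i • h i
        map_add' := by
          intro a b
          simp only [Pi.add_apply, add_smul]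
          rw [Finset.sum_add_distrib]
        map_smul' := by
          intro r a
          simp only [Pi.smul_apply, smul_eq_mul, RingHom.id_apply, Finset.smul_sum, smul_smul] }
      with hL
    have hLapply : ∀ c, L c = ∑ i, c i • h i := fun c => rfl
    -- the bad subspaces
    set W : MvPolynomial (Fin 2) k → Submodule k (Fin t → k) :=
      fun p => Submodule.comap L ((Ideal.span {p}).restrictScalars k) with hW
    have hWmem : ∀ p c, c ∈ W p ↔ p ∣ L c := by
      intro p c
      rw [hW]
      simp only [Submodule.mem_comap, Submodule.restrictScalars_mem]
      exact Ideal.mem_span_singleton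
    set fs := (UniqueFactorizationMonoid.factors f).toFinset with hfs
    have hWne : ∀ p ∈ fs, W p ≠ ⊤ := by
      intro p hp hWtop
      have hirr : Irreducible p :=
        UniqueFactorizationMonoid.irreducible_of_factor p (Multiset.mem_toFinset.mp hp)
      have hdvd : ∀ i, p ∣ h i := by
        intro i
        have : (Pi.single i 1 : Fin t → k) ∈ W p := hWtop ▸ Submodule.mem_top
        rw [hWmem, hLapply] at this
        rw [Finset.sum_eq_single i (fun j _ hj => by rw [Pi.single_eq_of_ne hj, zero_smul])
          (fun hni => absurd (Finset.mem_univ i) hni), Pi.single_eq_same, one_smul] at this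
        exact this
      exact hirr.not_isUnit (hgcd p hdvd)
    -- choose a good coefficient vector
    have hcover : (⋃ p ∈ fs.image W, (p : Set (Fin t → k))) ≠ Set.univ := by
      refine Subspace.biUnion_ne_univ_of_top_notMem ?_
      intro htop
      obtain ⟨p, hp, hWp⟩ := Finset.mem_image.mp htop
      exact hWne p hp hWp
    obtain ⟨c, hc⟩ := Set.ne_univ_iff_exists_notMem _ |>.mp hcover
    have hcgood : ∀ p ∈ fs, ¬ (p ∣ L c) := by
      intro p hp hdvd
      refine hc ?_
      refine Set.mem_biUnion (Finset.mem_image_of_mem W hp) ?_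
      rw [SetLike.mem_coe, hWmem]
      exact hdvd
    set g := L c with hg
    -- the set of factors is nonempty since f is not a unit
    have hfne0 : f ≠ 0 := hi₀
    have hfsne : fs.Nonempty := by
      obtain ⟨q, hqirr, hqdvd⟩ := WfDvdMonoid.exists_irreducible_factor hfu hfne0
      obtain ⟨p, hp, _⟩ := UniqueFactorizationMonoid.exists_mem_factors_of_dvd hfne0 hqirr hqdvd
      exact ⟨p, Multiset.mem_toFinset.mpr hp⟩
    have hgne0 : g ≠ 0 := by
      intro h0
      obtain ⟨p, hp⟩ := hfsne
      exact hcgood p hp (h0 ▸ dvd_zero p)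
    -- f and g are relatively prime
    have hrp : IsRelPrime f g := by
      intro d hdf hdg
      by_contra hnu
      have hd0 : d ≠ 0 := fun h0 => hfne0 (by simpa [h0] using hdf)
      obtain ⟨q, hqirr, hqd⟩ := WfDvdMonoid.exists_irreducible_factor hnu hd0
      obtain ⟨p, hp, hassoc⟩ :=
        UniqueFactorizationMonoid.exists_mem_factors_of_dvd hfne0 hqirr (hqd.trans hdf)
      exact hcgood p (Multiset.mem_toFinset.mpr hp) (hassoc.symm.dvd.trans (hqd.trans hdg))
    -- degrees
    have hgdeg : g.totalDegree ≤ m := by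
      rw [hg, hLapply]
      refine totalDegree_finsetSum_le ?_
      intro i _
      exact (totalDegree_smul_le (c i) (h i)).trans (hdeg i)
    -- evaluate
    have hSev : ∀ p ∈ S, eval ![p.1, p.2] f = 0 ∧ eval ![p.1, p.2] g = 0 := by
      intro p hp
      have hz := hSsub hp
      refine ⟨hz i₀, ?_⟩
      rw [hg, hLapply, map_sum]
      refine Finset.sum_eq_zero fun i _ => ?_
      rw [smul_eval, hz i, mul_zero]
    calc S.card ≤ f.totalDegree * g.totalDegree := bezout_count f g hfne0 hgne0 hrp S hSev
      _ ≤ m * m := Nat.mul_le_mul (hdeg i₀) hgdeg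
      _ = m ^ 2 := (sq m).symm
  -- conclude
  have hfin : Sset.Finite := by
    by_contra hinf
    obtain ⟨T, hTsub, hTcard⟩ := Set.Infinite.exists_subset_card_eq hinf (m ^ 2 + 1)
    have := key T hTsub
    omega
  refine ⟨hfin, ?_⟩
  rw [Set.ncard_eq_toFinset_card Sset hfin]
  exact key hfin.toFinset (by rw [Set.Finite.coe_toFinset])
end

section
/- Let k be a field and let Γ be a basic matrix algebra in k^{t×t}, i.e. a unital subalgebra of the algebra of t×t matrices over k such that every matrix in Γ is upper triangular and such that whenever a matrix A belongs to Γ, the diagonal matrix diag(A₁₁, …, A_tt) with the same diagonal entries also belongs to Γ. Then the Jacobson radical of the ring Γ equals the set of all matrices in Γ whose diagonal entries are all zero. -/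
/-- A strictly upper triangular `t × t` matrix is nilpotent: `M ^ t = 0`. -/
lemma strict_tri_pow_eq_zero {k : Type*} [Field k] {t : ℕ}
    {M : Matrix (Fin t) (Fin t) k}
    (h : ∀ i j : Fin t, (j : ℕ) ≤ i → M i j = 0) : M ^ t = 0 := by
  have key : ∀ n : ℕ, ∀ i j : Fin t, (j : ℕ) < i + n → (M ^ n) i j = 0 := by
    intro n
    induction n with
    | zero =>
      intro i j hj
      simp only [pow_zero]
      exact Matrix.one_apply_ne (by intro e; subst e; omega)
    | succ n ih =>
      intro i j hj
      rw [pow_succ']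
      rw [Matrix.mul_apply]
      apply Finset.sum_eq_zero
      intro l _
      rcases le_or_gt (l : ℕ) (i : ℕ) with hl | hl
      · rw [h i l hl, zero_mul]
      · rw [ih l j (by omega), mul_zero]
  ext i j
  simp [key t i j (by omega)]

set_option maxHeartbeats 1000000 in
set_option synthInstance.maxHeartbeats 200000 in
/-- The Jacobson radical of a basic matrix algebra Γ ⊆ k^{t×t} (a unital subalgebra
of upper triangular matrices closed under taking the diagonal part) is the set of
its matrices with zero diagonal. -/
theorem stmt_13 {k : Type*} [Field k] (t : ℕ)
    (Γ : Subalgebra k (Matrix (Fin t) (Fin t) k))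
    (htri : ∀ A ∈ Γ, ∀ i j : Fin t, j < i → A i j = 0)
    (hdiag : ∀ A ∈ Γ, Matrix.diagonal (fun i => A i i) ∈ Γ) :
    ∀ A : Γ, A ∈ Ideal.jacobson (⊥ : Ideal Γ) ↔
      ∀ i : Fin t, (A : Matrix (Fin t) (Fin t) k) i i = 0 := by
  intro A
  rw [Ideal.mem_jacobson_iff]
  constructor
  · intro hJ i
    by_contra hc
    set c : k := (A : Matrix (Fin t) (Fin t) k) i i with hc'
    obtain ⟨z, hz⟩ := hJ (algebraMap k Γ (-c⁻¹))
    rw [Ideal.mem_bot, sub_eq_zero] at hz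
    have hz' : z * (algebraMap k Γ (-c⁻¹) * A + 1) = 1 := by
      rw [mul_add, mul_one, ← mul_assoc]; exact hz
    -- push to matrices
    have hz'' : (z : Matrix (Fin t) (Fin t) k) *
        ((algebraMap k Γ (-c⁻¹) * A + 1 : Γ) : Matrix (Fin t) (Fin t) k) = 1 := by
      have h := congrArg Γ.val hz'
      rw [map_mul, map_one] at h
      exact h
    set M : Matrix (Fin t) (Fin t) k :=
      ((algebraMap k Γ (-c⁻¹) * A + 1 : Γ) : Matrix (Fin t) (Fin t) k) with hM
    have hMmem : M ∈ Γ := (algebraMap k Γ (-c⁻¹) * A + 1 : Γ).2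
    have hbt : M.BlockTriangular id := fun p q hpq => htri M hMmem p q hpq
    have hdet : M.det = ∏ p, M p p := Matrix.det_of_upperTriangular hbt
    have hMii : M i i = 0 := by
      have hMeq : M = algebraMap k (Matrix (Fin t) (Fin t) k) (-c⁻¹) *
          (A : Matrix (Fin t) (Fin t) k) + 1 := by
        rw [hM]
        push_cast
        rfl
      rw [hMeq]
      rw [Matrix.add_apply, Algebra.algebraMap_eq_smul_one, smul_mul_assoc, one_mul,
        Matrix.smul_apply, smul_eq_mul, Matrix.one_apply_eq, ← hc']
      field_simp
      norm_num
    have hdet0 : M.det = 0 := by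
      rw [hdet]
      exact Finset.prod_eq_zero (Finset.mem_univ i) hMii
    have hone : (z : Matrix (Fin t) (Fin t) k).det * M.det = 1 := by
      rw [← Matrix.det_mul, hz'', Matrix.det_one]
    rw [hdet0, mul_zero] at hone
    exact one_ne_zero hone.symm
  · intro hA y
    have hnil : IsNilpotent (y * A) := by
      refine ⟨t, ?_⟩
      have h0 : ((y * A : Γ) : Matrix (Fin t) (Fin t) k) ^ t = 0 := by
        apply strict_tri_pow_eq_zero
        intro i j hij
        show ((y : Matrix (Fin t) (Fin t) k) * (A : Matrix (Fin t) (Fin t) k)) i j = 0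
        rw [Matrix.mul_apply]
        apply Finset.sum_eq_zero
        intro l _
        rcases lt_trichotomy (l : ℕ) (i : ℕ) with hl | hl | hl
        · rw [htri y y.2 i l (by exact hl), zero_mul]
        · have hli : l = i := Fin.ext hl
          subst hli
          rcases eq_or_lt_of_le hij with he | hlt
          · have hjl : j = l := Fin.ext he
            subst hjl
            rw [hA j, mul_zero]
          · rw [htri A A.2 l j (by exact hlt), mul_zero]
        · rw [htri A A.2 l j (by omega), mul_zero]
      exact Subtype.ext (by push_cast; exact h0)
    obtain ⟨u, hu⟩ := hnil.isUnit_add_one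
    have hzu : (↑u⁻¹ : Γ) * (y * A + 1) = 1 := by rw [← hu]; exact u.inv_mul
    have h1 : (↑u⁻¹ : Γ) * y * A + ↑u⁻¹ = (↑u⁻¹ : Γ) * (y * A + 1) := by
      rw [mul_add, mul_one, mul_assoc]
    refine ⟨(↑u⁻¹ : Γ), ?_⟩
    rw [Ideal.mem_bot, sub_eq_zero, h1, hzu]
end

section
/- Let k be a field and let Γ be a basic matrix algebra in k^{t×t}, i.e. a unital subalgebra of the algebra of t×t matrices over k such that every matrix in Γ is upper triangular and such that whenever a matrix A belongs to Γ, the diagonal matrix diag(A₁₁, …, A_tt) with the same diagonal entries also belongs to Γ. Let R = {A ∈ Γ : A₁₁ = ⋯ = A_tt = 0} be the set of matrices in Γ with zero diagonal, define the equivalence relation ∼ on {1, …, t} by i ∼ j iff A_ii = A_jj for all A ∈ Γ, let I_β be an equivalence class of ∼, and let e_β = Σ_{i ∈ I_β} E_ii, where E_ii are the diagonal matrix units. Then e_β ∈ Γ, and the k-vector space R e_β = {A e_β : A ∈ R} has dimension dim_k(Γ e_β) − 1, where Γ e_β = {A e_β : A ∈ Γ}. -/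
open scoped Classical

section Aux

variable {k : Type*} [Field k] {t : ℕ}

/-- The linear functional picking out the (i,i) entry. -/
def entLM (k : Type*) [Field k] {t : ℕ} (i : Fin t) :
    Matrix (Fin t) (Fin t) k →ₗ[k] k where
  toFun M := M i i
  map_add' _ _ := rfl
  map_smul' _ _ := rfl

variable (Γ : Subalgebra k (Matrix (Fin t) (Fin t) k))

/-- diagonal entry of a product of two upper triangular matrices in Γ. -/
lemma aux_diag_mul
    (htri : ∀ A ∈ Γ, ∀ i j : Fin t, j < i → A i j = 0)
    {A B : Matrix (Fin t) (Fin t) k} (hA : A ∈ Γ) (hB : B ∈ Γ) (i : Fin t) :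
    (A * B) i i = A i i * B i i := by
  rw [Matrix.mul_apply]
  refine Finset.sum_eq_single i (fun m _ hm => ?_) (by simp)
  rcases lt_or_gt_of_ne hm with h | h
  · rw [htri A hA i m h, zero_mul]
  · rw [htri B hB m i h, mul_zero]

/-- There exists a matrix in Γ whose diagonal entries are the given products. -/
lemma aux_prod_mem
    (htri : ∀ A ∈ Γ, ∀ i j : Fin t, j < i → A i j = 0)
    (s : Finset (Fin t)) (f : Fin t → Matrix (Fin t) (Fin t) k)
    (hf : ∀ j ∈ s, f j ∈ Γ) :
    ∃ B ∈ Γ, ∀ i, B i i = ∏ j ∈ s, f j i i := by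
  induction s using Finset.cons_induction with
  | empty => exact ⟨1, Γ.one_mem, fun i => by simp [Matrix.one_apply]⟩
  | cons a s ha ih =>
    obtain ⟨B, hB, hBd⟩ := ih (fun j hj => hf j (Finset.mem_cons_of_mem hj))
    have hfa : f a ∈ Γ := hf a (Finset.mem_cons_self a s)
    refine ⟨f a * B, Γ.mul_mem hfa hB, fun i => ?_⟩
    rw [aux_diag_mul Γ htri hfa hB, hBd, Finset.prod_cons]

end Aux

open scoped Classical in
/-- For a basic matrix algebra Γ ⊆ k^{t×t} with radical R (its zero-diagonal matrices)
and the idempotent e_β = Σ_{i ∈ I_β} E_ii attached to an equivalence class I_β of the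
relation i ∼ j ⟺ (A_ii = A_jj for all A ∈ Γ), one has e_β ∈ Γ and
dim_k (R e_β) = dim_k (Γ e_β) − 1. -/
theorem stmt_14 {k : Type*} [Field k] (t : ℕ)
    (Γ : Subalgebra k (Matrix (Fin t) (Fin t) k))
    (htri : ∀ A ∈ Γ, ∀ i j : Fin t, j < i → A i j = 0)
    (hdiag : ∀ A ∈ Γ, Matrix.diagonal (fun i => A i i) ∈ Γ)
    (c : Fin t) (e : Matrix (Fin t) (Fin t) k)
    (he : e = ∑ i : Fin t,
      if ∀ A ∈ Γ, A i i = A c c then Matrix.single i i (1 : k) else 0) :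
    e ∈ Γ ∧
    Module.finrank k
        (Submodule.span k {M : Matrix (Fin t) (Fin t) k |
          ∃ A ∈ Γ, (∀ i : Fin t, A i i = 0) ∧ M = A * e}) =
      Module.finrank k
        (Submodule.span k {M : Matrix (Fin t) (Fin t) k | ∃ A ∈ Γ, M = A * e}) - 1 := by
  -- `d` is the diagonal of `e`
  have he' : e = Matrix.diagonal
      (fun i => if ∀ A ∈ Γ, A i i = A c c then (1 : k) else 0) := by
    rw [he]
    ext a b
    rw [Matrix.sum_apply]
    rw [Finset.sum_eq_single a (fun m _ hm => by
        split
        · simp [Matrix.single, Matrix.of_apply, hm]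
        · rfl)
      (by simp)]
    by_cases hab : a = b
    · subst hab
      by_cases h : ∀ A ∈ Γ, A a a = A c c
      · rw [if_pos h, Matrix.diagonal_apply_eq, if_pos h]
        simp [Matrix.single]
      · rw [if_neg h, Matrix.diagonal_apply_eq, if_neg h]
        rfl
    · rw [Matrix.diagonal_apply_ne _ hab]
      split
      · simp [Matrix.single, Matrix.of_apply, hab]
      · rfl
  set d : Fin t → k := fun i => if ∀ A ∈ Γ, A i i = A c c then (1 : k) else 0 with hd
  have hdc : d c = 1 := if_pos (fun A _ => rfl)
  -- e ∈ Γ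
  have heΓ : e ∈ Γ := by
    set s : Finset (Fin t) :=
      Finset.univ.filter (fun j => ¬ ∀ A ∈ Γ, A j j = A c c) with hs
    have hchoice : ∀ j ∈ s, ∃ A ∈ Γ, A j j ≠ A c c := by
      intro j hj
      have h1 : ¬ ∀ A ∈ Γ, A j j = A c c := (Finset.mem_filter.mp hj).2
      push_neg at h1
      obtain ⟨A, hA, h⟩ := h1
      exact ⟨A, hA, h⟩
    choose! A hAΓ hAne using hchoice
    set f : Fin t → Matrix (Fin t) (Fin t) k :=
      fun j => (A j c c - A j j j)⁻¹ • (A j - (A j j j) • (1 : Matrix (Fin t) (Fin t) k))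
      with hf
    have hfΓ : ∀ j ∈ s, f j ∈ Γ := fun j hj =>
      Γ.smul_mem (Γ.sub_mem (hAΓ j hj) (Γ.smul_mem Γ.one_mem _)) _
    obtain ⟨B, hB, hBd⟩ := aux_prod_mem Γ htri s f hfΓ
    have hBdiag : (fun i => B i i) = d := by
      funext i
      rw [hBd i]
      show ∏ j ∈ s, f j i i = if ∀ A ∈ Γ, A i i = A c c then (1 : k) else 0
      by_cases hi : ∀ A ∈ Γ, A i i = A c c
      · rw [if_pos hi]
        refine Finset.prod_eq_one (fun j hj => ?_)
        have h1 : A j i i = A j c c := hi (A j) (hAΓ j hj)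
        have h2 : A j c c - A j j j ≠ 0 := sub_ne_zero.mpr (Ne.symm (hAne j hj))
        simp only [hf, Matrix.smul_apply, Matrix.sub_apply, Matrix.one_apply_eq,
          smul_eq_mul, h1]
        field_simp
      · rw [if_neg hi]
        refine Finset.prod_eq_zero (Finset.mem_filter.mpr ⟨Finset.mem_univ i, hi⟩) ?_
        simp [hf, Matrix.smul_apply, Matrix.sub_apply, Matrix.one_apply_eq]
    have := hdiag B hB
    rwa [hBdiag, ← he'] at this
  refine ⟨heΓ, ?_⟩
  -- submodules
  set mulE : Matrix (Fin t) (Fin t) k →ₗ[k] Matrix (Fin t) (Fin t) k :=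
    LinearMap.mulRight k e with hmulE
  set R : Submodule k (Matrix (Fin t) (Fin t) k) :=
    Subalgebra.toSubmodule Γ ⊓ ⨅ i, LinearMap.ker (entLM k i) with hR
  set W : Submodule k (Matrix (Fin t) (Fin t) k) :=
    (Subalgebra.toSubmodule Γ).map mulE with hW
  set U : Submodule k (Matrix (Fin t) (Fin t) k) := R.map mulE with hU
  have hRmem : ∀ X : Matrix (Fin t) (Fin t) k,
      X ∈ R ↔ X ∈ Γ ∧ ∀ i, X i i = 0 := by
    intro X
    simp [hR, Submodule.mem_inf, Submodule.mem_iInf, LinearMap.mem_ker, entLM]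
    exact fun _ => Iff.rfl
  have hsetW : {M : Matrix (Fin t) (Fin t) k | ∃ A ∈ Γ, M = A * e} = ↑W := by
    ext M
    simp only [hW, Set.mem_setOf_eq, SetLike.mem_coe, Submodule.mem_map,
      Subalgebra.mem_toSubmodule, hmulE, LinearMap.mulRight_apply]
    exact ⟨fun ⟨A, hA, h⟩ => ⟨A, hA, h.symm⟩, fun ⟨A, hA, h⟩ => ⟨A, hA, h.symm⟩⟩
  have hsetU : {M : Matrix (Fin t) (Fin t) k |
      ∃ A ∈ Γ, (∀ i : Fin t, A i i = 0) ∧ M = A * e} = ↑U := by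
    ext M
    simp only [hU, Set.mem_setOf_eq, SetLike.mem_coe, Submodule.mem_map,
      hmulE, LinearMap.mulRight_apply]
    constructor
    · rintro ⟨A, hA, hz, rfl⟩
      exact ⟨A, (hRmem A).mpr ⟨hA, hz⟩, rfl⟩
    · rintro ⟨A, hA, rfl⟩
      obtain ⟨h1, h2⟩ := (hRmem A).mp hA
      exact ⟨A, h1, h2, rfl⟩
  rw [hsetW, hsetU, Submodule.span_eq, Submodule.span_eq]
  have hmul_cc : ∀ A : Matrix (Fin t) (Fin t) k, (A * e) c c = A c c := by
    intro A
    rw [he', Matrix.mul_apply]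
    rw [Finset.sum_eq_single c
      (fun m _ hm => by rw [Matrix.diagonal_apply_ne _ hm, mul_zero]) (by simp)]
    rw [Matrix.diagonal_apply_eq]
    show A c c * d c = A c c
    rw [hdc, mul_one]
  -- the functional on W
  set φ : W →ₗ[k] k := (entLM k c).comp W.subtype with hφ
  have hrange : LinearMap.range φ = ⊤ := by
    rw [LinearMap.range_eq_top]
    intro x
    have heW : e ∈ W := ⟨1, Γ.one_mem, by simp [hmulE]⟩
    refine ⟨⟨x • e, W.smul_mem x heW⟩, ?_⟩
    show (x • e) c c = x
    rw [he', Matrix.smul_apply, Matrix.diagonal_apply_eq]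
    show x • d c = x
    rw [hdc, smul_eq_mul, mul_one]
  have hker : (LinearMap.ker φ).map W.subtype = U := by
    apply le_antisymm
    · rintro x ⟨⟨M, hMW⟩, hMk, rfl⟩
      simp only [SetLike.mem_coe, LinearMap.mem_ker] at hMk
      have hMc : M c c = 0 := hMk
      obtain ⟨A, hA, rfl⟩ := hMW
      replace hA : A ∈ Γ := hA
      have hAe : mulE A = A * e := rfl
      have hAcc : A c c = 0 := by
        rw [← hmul_cc A, ← hAe]; exact hMc
      show mulE A ∈ U
      rw [hU, Submodule.mem_map]
      have hz : Matrix.diagonal (fun i => A i i) * e = 0 := by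
        rw [he', Matrix.diagonal_mul_diagonal]
        have hzero : (fun i => A i i * d i) = fun _ => (0 : k) := by
          funext i
          by_cases h : ∀ A ∈ Γ, A i i = A c c
          · rw [h A hA, hAcc, zero_mul]
          · rw [show d i = 0 from if_neg h, mul_zero]
        rw [show (fun i => A i i * (if ∀ A ∈ Γ, A i i = A c c then (1:k) else 0)) =
          fun i => A i i * d i from rfl, hzero, Matrix.diagonal_zero]
      refine ⟨A - Matrix.diagonal (fun i => A i i), ?_, ?_⟩
      · exact (hRmem _).mpr ⟨Γ.sub_mem hA (hdiag A hA), fun i => by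
          simp [Matrix.sub_apply, Matrix.diagonal_apply_eq]⟩
      · show (A - Matrix.diagonal (fun i => A i i)) * e = A * e
        rw [sub_mul, hz, sub_zero]
    · rintro x ⟨A, hA, rfl⟩
      obtain ⟨h1, h2⟩ := (hRmem A).mp hA
      refine SetLike.mem_coe.mpr (Submodule.mem_map.mpr
        ⟨⟨mulE A, Submodule.mem_map.mpr ⟨A, (Subalgebra.mem_toSubmodule Γ).mpr h1, rfl⟩⟩, ?_, rfl⟩)
      rw [LinearMap.mem_ker]
      show (A * e) c c = 0
      rw [hmul_cc A, h2 c]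
  have main := LinearMap.finrank_range_add_finrank_ker φ
  rw [hrange, finrank_top, Module.finrank_self] at main
  have hfk : Module.finrank k ↥((LinearMap.ker φ).map W.subtype)
      = Module.finrank k ↥(LinearMap.ker φ) :=
    Submodule.finrank_map_subtype_eq W (LinearMap.ker φ)
  rw [hker] at hfk
  omega
end
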